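/- The subset C = π({w ∈ Σ : w₂ ∈ {2,3} and w_k ∈ {0,1} for all k ≥ 3}) of K is homeomorphic to the circle S¹. -/

import Mathlib

open Classical

/-- The space `Σ` of infinite words over the alphabet `X = {0,1,2,3,4,5} = ℤ/6`
(indexed from `0`: the letter `w₁` of the paper is `w 0`). -/
abbrev Word := ℕ → ZMod 6

/-- The metric `δ_r` on a word space: `δ_r(w,v) = r^ℓ` where `ℓ ≥ 1` is the first
(1-indexed) position at which `w` and `v` differ, and `δ_r(w,w) = 0`. -/
noncomputable def wordDist {X : Type*} (r : ℝ) (w v : ℕ → X) : ℝ :=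
  if h : w = v then 0
  else r ^ (Nat.find (Function.ne_iff.mp h) + 1)

/-- Prepending a letter to an infinite word: `σ_i(w) = iw`. -/
def prepend {X : Type*} (i : X) (w : ℕ → X) : ℕ → X
  | 0 => i
  | n + 1 => w n

/-- `α_k = u₁ + ⋯ + u_k` in `ℤ/6` (the sum of the first `k` letters of `u`). -/
def alphaSum (u : Word) (k : ℕ) : ZMod 6 := ∑ j ∈ Finset.range k, u j

/-- The map `f : Σ → Σ`, `f(u) = v` with `v₁ = u₁` and
`v_m = (−1)^{α_{m−1}} u_m + α_{m−1}` (mod 6); here `(−1)^α` is `+1` when `α ∈ ℤ/6` is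
even and `−1` when `α` is odd.  (In 0-indexed form, position `m` corresponds to index
`m−1`, and `α_0 = 0` is even, so the case `v₁ = u₁` is subsumed.) -/
noncomputable def fMap (u : Word) : Word := fun n =>
  (if Even (alphaSum u n) then u n else -(u n)) + alphaSum u n

/-- The generating relation of `∼`: `u` and `w` are of the forms `x i α v` and
`x j α v`, where `x` is a finite word (of length `ℓ`, occupying indices `< ℓ`),
`j = i + 1` (mod 6), `α ∈ {3,4}` if `i` is odd and `α ∈ {1,2}` if `i` is even, and
`v ∈ {0,5}^ℕ`. -/
def Tilde (u w : Word) : Prop :=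
  ∃ ℓ : ℕ, (∀ m < ℓ, u m = w m) ∧ w ℓ = u ℓ + 1 ∧ (∀ m > ℓ, u m = w m) ∧
    ((¬ Even (u ℓ) ∧ (u (ℓ + 1) = 3 ∨ u (ℓ + 1) = 4)) ∨
      (Even (u ℓ) ∧ (u (ℓ + 1) = 1 ∨ u (ℓ + 1) = 2))) ∧
    (∀ m, ℓ + 2 ≤ m → u m = 0 ∨ u m = 5)

/-- The equivalence relation `∼` on `Σ` generated by `Tilde`, as a setoid. -/
def simSetoid : Setoid Word := ⟨Relation.EqvGen Tilde, Relation.EqvGen.is_equivalence _⟩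

/-- The Strichartz hexacarpet `K = Σ/∼` (with the quotient topology, `ℤ/6` being
discrete and `Σ` carrying the product topology). -/
def Hexacarpet := Quotient simSetoid

instance : TopologicalSpace Hexacarpet :=
  instTopologicalSpaceQuotient

/-- The quotient map `π : Σ → K`. -/
def piK : Word → Hexacarpet := Quotient.mk simSetoid

instance : DecidablePred (Even : ZMod 6 → Prop) := fun x =>
  decidable_of_iff (∃ r ∈ (Finset.univ : Finset (ZMod 6)), x = r + r)
    ⟨fun ⟨r, _, h⟩ => ⟨r, h⟩, fun ⟨r, h⟩ => ⟨r, Finset.mem_univ r, h⟩⟩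

noncomputable section
namespace S13
open Real Finset

/-- bit of a letter -/
def bitb (x : ZMod 6) : ℕ := if x = 1 then 1 else 0

/-- cumulative bit sum (Gray decode parity) -/
def csum (s : ℕ → ZMod 6) (k : ℕ) : ℕ := ∑ m ∈ Finset.range (k+1), bitb (s m)

def Tterm (s : ℕ → ZMod 6) (k : ℕ) : ℝ := if Even (csum s k) then 0 else (1/2)^(k+1)

def Tt (s : ℕ → ZMod 6) : ℝ := ∑' k, Tterm s k

def tl (w : Word) : ℕ → ZMod 6 := fun k => w (k+2)

lemma Tterm_nonneg (s : ℕ → ZMod 6) (k : ℕ) : 0 ≤ Tterm s k := by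
  unfold Tterm; split <;> positivity

lemma Tterm_le (s : ℕ → ZMod 6) (k : ℕ) : Tterm s k ≤ (1/2)^(k+1) := by
  unfold Tterm; split
  · positivity
  · exact le_refl _

lemma sgeom : Summable (fun k : ℕ => ((1/2:ℝ))^(k+1)) := by
  simpa [Function.comp_def] using summable_geometric_two.comp_injective (add_left_injective 1)

lemma summable_Tterm (s : ℕ → ZMod 6) : Summable (Tterm s) :=
  Summable.of_nonneg_of_le (Tterm_nonneg s) (Tterm_le s) sgeom

lemma tsum_half_pow : ∑' k : ℕ, ((1/2:ℝ))^(k+1) = 1 := by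
  have h := tsum_geometric_two
  have h2 : ∑' k : ℕ, ((1/2:ℝ))^k = 2 := by simpa using h
  have := Summable.tsum_eq_zero_add (f := fun k : ℕ => ((1/2:ℝ))^k) (by simpa using summable_geometric_two)
  simp only [pow_zero] at this
  rw [h2] at this
  linarith

lemma Tt_nonneg (s : ℕ → ZMod 6) : 0 ≤ Tt s :=
  tsum_nonneg (Tterm_nonneg s)

lemma Tt_le_one (s : ℕ → ZMod 6) : Tt s ≤ 1 := by
  calc Tt s ≤ ∑' k : ℕ, ((1/2:ℝ))^(k+1) := Summable.tsum_le_tsum (Tterm_le s) (summable_Tterm s) sgeom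
  _ = 1 := tsum_half_pow

section Cont
open Finset

lemma continuous_csum (k : ℕ) : Continuous fun w : Word => csum (tl w) k := by
  apply continuous_finset_sum
  intro m _
  exact Continuous.comp (continuous_of_discreteTopology (f := bitb)) (continuous_apply (m+2))

lemma continuous_Tterm (k : ℕ) : Continuous fun w : Word => Tterm (tl w) k := by
  have : (fun w : Word => Tterm (tl w) k)
      = (fun n : ℕ => if Even n then (0:ℝ) else (1/2)^(k+1)) ∘ (fun w => csum (tl w) k) := rfl
  rw [this]
  exact continuous_of_discreteTopology.comp (continuous_csum k)

lemma continuous_Tt : Continuous fun w : Word => Tt (tl w) := by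
  apply continuous_tsum continuous_Tterm sgeom
  intro n w
  rw [Real.norm_of_nonneg (Tterm_nonneg _ n)]
  exact Tterm_le _ n

/-- the arc index of the 12 arcs around the circle -/
def arcIdx (i : ZMod 6) (b : Bool) : ℕ :=
  match i.val, b with
  | 0, false => 0
  | 0, true  => 1
  | 5, true  => 2
  | 5, false => 3
  | 4, false => 4
  | 4, true  => 5
  | 3, true  => 6
  | 3, false => 7
  | 2, false => 8
  | 2, true  => 9
  | 1, true  => 10
  | 1, false => 11
  | _, _ => 0

def arcInv : ℕ → ZMod 6 × Bool
  | 0 => (0,false) | 1 => (0,true) | 2 => (5,true) | 3 => (5,false)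
  | 4 => (4,false) | 5 => (4,true) | 6 => (3,true) | 7 => (3,false)
  | 8 => (2,false) | 9 => (2,true) | 10 => (1,true) | _ => (1,false)

def AIdx (w : Word) : ℕ := arcIdx (w 0) (decide (w 1 = 3))

lemma continuous_AIdx : Continuous AIdx := by
  have : AIdx = (fun p : ZMod 6 × ZMod 6 => arcIdx p.1 (decide (p.2 = 3)))
      ∘ (fun w : Word => (w 0, w 1)) := rfl
  rw [this]
  exact continuous_of_discreteTopology.comp ((continuous_apply 0).prodMk (continuous_apply 1))

def theta (w : Word) : ℝ :=
  AIdx w + (if Even (AIdx w) then Tt (tl w) else 1 - Tt (tl w))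

lemma continuous_theta : Continuous theta := by
  have : theta = fun w => ((AIdx w : ℝ) + (if Even (AIdx w) then (0:ℝ) else 1))
      + (if Even (AIdx w) then (1:ℝ) else -1) * Tt (tl w) := by
    funext w
    unfold theta
    split <;> ring
  rw [this]
  apply Continuous.add
  · exact Continuous.comp (continuous_of_discreteTopology
      (f := fun n : ℕ => (n : ℝ) + (if Even n then (0:ℝ) else 1))) continuous_AIdx
  · exact (Continuous.comp (continuous_of_discreteTopology
      (f := fun n : ℕ => if Even n then (1:ℝ) else -1)) continuous_AIdx).mul continuous_Tt

def psi (w : Word) : Circle := Circle.exp (Real.pi/6 * theta w)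

lemma continuous_psi : Continuous psi :=
  Circle.exp.continuous.comp (continuous_const.mul continuous_theta)

end Cont
section Vals
open Finset

def Bin (s : ℕ → ZMod 6) : Prop := ∀ m, s m = 0 ∨ s m = 1

lemma bitb_zero : bitb 0 = 0 := by decide
lemma bitb_one : bitb 1 = 1 := by decide

lemma csum_zero' (s : ℕ → ZMod 6) : csum s 0 = bitb (s 0) := by
  simp [csum]

lemma csum_succ (s : ℕ → ZMod 6) (m : ℕ) : csum s (m+1) = csum s m + bitb (s (m+1)) := by
  simp [csum, Finset.sum_range_succ]

lemma even_bitb {x : ZMod 6} : Even (bitb x) ↔ x ≠ 1 := by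
  unfold bitb; split <;> simp_all

lemma bin_eq_zero {s : ℕ → ZMod 6} (hb : Bin s) {m : ℕ} (h : Even (bitb (s m))) : s m = 0 := by
  rcases hb m with h0 | h1
  · exact h0
  · exact absurd h1 (even_bitb.mp h)

lemma bin_eq_one {s : ℕ → ZMod 6} (hb : Bin s) {m : ℕ} (h : ¬ Even (bitb (s m))) : s m = 1 := by
  by_contra h1
  exact h (even_bitb.mpr h1)

lemma all_zero {f : ℕ → ℝ} (hnn : ∀ k, 0 ≤ f k) (hsum : Summable f)
    (h : ∑' k, f k = 0) (k : ℕ) : f k = 0 := by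
  refine le_antisymm ?_ (hnn k)
  calc f k ≤ ∑' j, f j := Summable.le_tsum hsum k (fun j _ => hnn j)
  _ = 0 := h

lemma all_eq {f g : ℕ → ℝ} (hle : ∀ k, f k ≤ g k) (hf : Summable f) (hg : Summable g)
    (h : ∑' k, f k = ∑' k, g k) (k : ℕ) : f k = g k := by
  by_contra hne
  exact absurd h (ne_of_lt (Summable.tsum_lt_tsum hle (lt_of_le_of_ne (hle k) hne) hf hg))

lemma tail_tsum_const (s : ℕ → ZMod 6) (n c : ℕ) (h : ∀ k, n ≤ k → csum s k = c) :
    ∑' k : ℕ, Tterm s (k+n) = if Even c then 0 else (1/2)^n := by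
  have he : ∀ k : ℕ, Tterm s (k+n) = if Even c then 0 else (1/2)^(k+n+1) := by
    intro k
    rw [Tterm, h (k+n) (Nat.le_add_left n k)]
  split
  · next hc =>
    rw [tsum_congr he]
    simp [hc]
  · next hc =>
    rw [tsum_congr he]
    simp only [if_neg hc]
    have : ∀ k : ℕ, ((1:ℝ)/2)^(k+n+1) = (1/2)^n * (1/2)^(k+1) := by
      intro k; ring
    rw [tsum_congr this, tsum_mul_left, tsum_half_pow, mul_one]

lemma Tt_split (s : ℕ → ZMod 6) (n : ℕ) :
    Tt s = ∑ k ∈ Finset.range n, Tterm s k + ∑' k : ℕ, Tterm s (k+n) :=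
  (Summable.sum_add_tsum_nat_add n (summable_Tterm s)).symm

lemma Tt_all_zero {s : ℕ → ZMod 6} (h : ∀ k, s k = 0) : Tt s = 0 := by
  have hc : ∀ k, csum s k = 0 := by
    intro k
    simp [csum, h, bitb_zero]
  have : ∀ k, Tterm s k = 0 := by
    intro k; simp [Tterm, hc]
  simp [Tt, tsum_congr this]

lemma Tt_one0 {s : ℕ → ZMod 6} (h0 : s 0 = 1) (h : ∀ k, 1 ≤ k → s k = 0) : Tt s = 1 := by
  have hc : ∀ k, csum s k = 1 := by
    intro k
    induction k with
    | zero => simp [csum_zero', h0, bitb]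
    | succ m ih => rw [csum_succ, ih, h (m+1) (Nat.le_add_left 1 m), bitb_zero]
  have : ∀ k, Tterm s k = (1/2)^(k+1) := by
    intro k; simp [Tterm, hc]
  rw [Tt, tsum_congr this, tsum_half_pow]

lemma parity_all_even {s : ℕ → ZMod 6} (hb : Bin s) (h : ∀ k, Even (csum s k)) :
    ∀ k, s k = 0 := by
  intro k
  cases k with
  | zero => exact bin_eq_zero hb (csum_zero' s ▸ h 0)
  | succ m =>
      apply bin_eq_zero hb
      have := h (m+1)
      rw [csum_succ, Nat.even_add] at this
      exact this.mp (h m)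

lemma parity_all_odd {s : ℕ → ZMod 6} (hb : Bin s) (h : ∀ k, ¬ Even (csum s k)) :
    s 0 = 1 ∧ ∀ k, 1 ≤ k → s k = 0 := by
  constructor
  · exact bin_eq_one hb (csum_zero' s ▸ h 0)
  · intro k hk
    obtain ⟨m, rfl⟩ := Nat.exists_eq_add_of_le hk
    apply bin_eq_zero hb
    have h1 := h m
    have h2 := h (m+1)
    rw [csum_succ, Nat.even_add] at h2
    rw [show 1 + m = m + 1 from Nat.add_comm 1 m]
    by_contra hodd
    exact h2 (iff_of_false h1 hodd)

lemma Tt_eq_zero_iff {s : ℕ → ZMod 6} (hb : Bin s) (h : Tt s = 0) : ∀ k, s k = 0 := by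
  apply parity_all_even hb
  intro k
  have := all_zero (Tterm_nonneg s) (summable_Tterm s) h k
  rw [Tterm] at this
  by_contra hodd
  rw [if_neg hodd] at this
  exact absurd this (by positivity)

lemma Tt_eq_one_iff {s : ℕ → ZMod 6} (hb : Bin s) (h : Tt s = 1) :
    s 0 = 1 ∧ ∀ k, 1 ≤ k → s k = 0 := by
  apply parity_all_odd hb
  intro k
  have := all_eq (Tterm_le s) (summable_Tterm s) sgeom (by rw [tsum_half_pow]; exact h) k
  rw [Tterm] at this
  intro heven
  rw [if_pos heven] at this
  exact absurd this.symm (by positivity)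

end Vals
section Gray
open Finset

lemma tail_geom (n : ℕ) : ∑' k : ℕ, ((1:ℝ)/2)^(k+n+1) = (1/2)^n := by
  have : ∀ k : ℕ, ((1:ℝ)/2)^(k+n+1) = (1/2)^n * (1/2)^(k+1) := by intro k; ring
  rw [tsum_congr this, tsum_mul_left, tsum_half_pow, mul_one]

lemma sgeom' (n : ℕ) : Summable (fun k : ℕ => ((1:ℝ)/2)^(k+n+1)) := by
  have : ∀ k : ℕ, ((1:ℝ)/2)^(k+n+1) = (1/2)^n * (1/2)^(k+1) := by intro k; ring
  rw [funext this]
  exact sgeom.mul_left _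

def grayPair (s s' : ℕ → ZMod 6) : Prop :=
  ∃ j, (∀ k < j, s k = s' k) ∧ s j = 0 ∧ s' j = 1 ∧ s (j+1) = 1 ∧ s' (j+1) = 1 ∧
    (∀ k, j+2 ≤ k → s k = 0) ∧ (∀ k, j+2 ≤ k → s' k = 0)

/-- parity step: if consecutive csums have equal parity the next letter is 0 -/
lemma step_val0 {s : ℕ → ZMod 6} (hb : Bin s) {m : ℕ}
    (h : Even (csum s m) ↔ Even (csum s (m+1))) : s (m+1) = 0 := by
  apply bin_eq_zero hb
  rw [csum_succ, Nat.even_add] at h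
  rcases Nat.even_or_odd (csum s m) with he | ho
  · exact (h.mp he).mp he
  · rw [← Nat.not_even_iff_odd] at ho
    by_contra hodd
    exact ho (h.mpr (iff_of_false ho hodd))

lemma step_val1 {s : ℕ → ZMod 6} (hb : Bin s) {m : ℕ}
    (h : ¬ (Even (csum s m) ↔ Even (csum s (m+1)))) : s (m+1) = 1 := by
  apply bin_eq_one hb
  rw [csum_succ, Nat.even_add] at h
  intro hbit
  exact h (iff_of_true (by tauto) hbit |> fun _ => by tauto)

lemma csum_congr {s s' : ℕ → ZMod 6} {n : ℕ} (h : ∀ m < n, s m = s' m) {k : ℕ} (hk : k < n) :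
    csum s k = csum s' k := by
  apply Finset.sum_congr rfl
  intro m hm
  rw [h m (lt_of_lt_of_le (Finset.mem_range.mp hm) hk)]

/-- values agree where bit parities can be read off equal csum parities -/
lemma vals_eq_of_parity {s s' : ℕ → ZMod 6} (hb : Bin s) (hb' : Bin s') {n : ℕ}
    (h : ∀ k ≤ n, (Even (csum s k) ↔ Even (csum s' k))) : ∀ m ≤ n, s m = s' m := by
  intro m hm
  cases m with
  | zero =>
      have h0 := h 0 (Nat.zero_le n)
      rw [csum_zero', csum_zero'] at h0
      rcases Nat.even_or_odd (bitb (s 0)) with he | ho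
      · rw [bin_eq_zero hb he, bin_eq_zero hb' (h0.mp he)]
      · rw [← Nat.not_even_iff_odd] at ho
        rw [bin_eq_one hb ho, bin_eq_one hb' (fun he' => ho (h0.mpr he'))]
  | succ k =>
      have h1 := h k (le_of_lt hm)
      have h2 := h (k+1) hm
      by_cases hiff : Even (csum s k) ↔ Even (csum s (k+1))
      · rw [step_val0 hb hiff, step_val0 hb' (by tauto)]
      · rw [step_val1 hb hiff, step_val1 hb' (by tauto)]

lemma summable_shift (s : ℕ → ZMod 6) (n : ℕ) : Summable (fun k : ℕ => Tterm s (k+n)) :=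
  ((summable_nat_add_iff n).mpr (summable_Tterm s))

lemma gray_aux {s s' : ℕ → ZMod 6} (hb : Bin s) (hb' : Bin s') (h : Tt s = Tt s')
    {N : ℕ} (hlt : ∀ k < N, (Even (csum s k) ↔ Even (csum s' k)))
    (hsN : Even (csum s N)) (hs'N : ¬ Even (csum s' N)) :
    grayPair s s' ∨ grayPair s' s := by
  have vals_eq : ∀ m < N, s m = s' m := by
    intro m hm
    exact vals_eq_of_parity hb hb' (fun k hk => hlt k (lt_of_le_of_lt hk hm)) m le_rfl
  have hC : ∑ k ∈ Finset.range N, Tterm s k = ∑ k ∈ Finset.range N, Tterm s' k := by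
    apply Finset.sum_congr rfl
    intro k hk
    rw [Tterm, Tterm, csum_congr vals_eq (Finset.mem_range.mp hk)]
  have e1 := Tt_split s (N+1)
  have e2 := Tt_split s' (N+1)
  rw [Finset.sum_range_succ] at e1 e2
  have hTs : Tterm s N = 0 := by rw [Tterm, if_pos hsN]
  have hTs' : Tterm s' N = (1/2)^(N+1) := by rw [Tterm, if_neg hs'N]
  set A := ∑' k : ℕ, Tterm s (k+(N+1)) with hA
  set B := ∑' k : ℕ, Tterm s' (k+(N+1)) with hB
  have hAle : A ≤ (1/2)^(N+1) := by
    calc A ≤ ∑' k : ℕ, ((1:ℝ)/2)^(k+(N+1)+1) :=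
      Summable.tsum_le_tsum (fun k => Tterm_le s (k+(N+1))) (summable_shift s (N+1)) (sgeom' (N+1))
    _ = (1/2)^(N+1) := tail_geom (N+1)
  have hBnn : 0 ≤ B := tsum_nonneg (fun k => Tterm_nonneg s' _)
  have heq : A = (1/2)^(N+1) + B := by
    rw [e1, e2, hTs, hTs', hC] at h
    linarith
  have hB0 : B = 0 := by linarith
  have hAeq : A = (1/2)^(N+1) := by linarith
  -- parities after N
  have hs'even : ∀ m, N+1 ≤ m → Even (csum s' m) := by
    intro m hm
    obtain ⟨k, rfl⟩ := Nat.exists_eq_add_of_le hm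
    have h0 := all_zero (fun k => Tterm_nonneg s' _) (summable_shift s' (N+1)) hB0 k
    rw [Tterm] at h0
    by_contra hodd
    rw [if_neg (by rwa [Nat.add_comm (N+1) k] at hodd)] at h0
    exact absurd h0 (by positivity)
  have hsodd : ∀ m, N+1 ≤ m → ¬ Even (csum s m) := by
    intro m hm
    obtain ⟨k, rfl⟩ := Nat.exists_eq_add_of_le hm
    have h0 := all_eq (fun k => Tterm_le s (k+(N+1))) (summable_shift s (N+1)) (sgeom' (N+1))
      (by rw [← hA, hAeq, tail_geom]) k
    rw [Tterm] at h0
    intro heven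
    rw [if_pos (by rwa [Nat.add_comm (N+1) k] at heven)] at h0
    exact absurd h0.symm (by positivity)
  have hs_next : s (N+1) = 1 :=
    step_val1 hb (fun hiff => hsodd (N+1) le_rfl (hiff.mp hsN))
  have hs'_next : s' (N+1) = 1 :=
    step_val1 hb' (fun hiff => hs'N (hiff.mpr (hs'even (N+1) le_rfl)))
  have hs_tail : ∀ k, N+2 ≤ k → s k = 0 := by
    intro k hk
    obtain ⟨m, rfl⟩ := Nat.exists_eq_add_of_le hk
    rw [show N+2+m = (N+1+m)+1 by ring]
    exact step_val0 hb (iff_of_false (hsodd _ (by omega)) (hsodd _ (by omega)))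
  have hs'_tail : ∀ k, N+2 ≤ k → s' k = 0 := by
    intro k hk
    obtain ⟨m, rfl⟩ := Nat.exists_eq_add_of_le hk
    rw [show N+2+m = (N+1+m)+1 by ring]
    exact step_val0 hb' (iff_of_true (hs'even _ (by omega)) (hs'even _ (by omega)))
  -- the letters at N
  cases N with
  | zero =>
      left
      refine ⟨0, fun k hk => absurd hk (Nat.not_lt_zero k), ?_, ?_, hs_next, hs'_next, hs_tail, hs'_tail⟩
      · exact bin_eq_zero hb (by rwa [csum_zero'] at hsN)
      · exact bin_eq_one hb' (by rwa [csum_zero'] at hs'N)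
  | succ M =>
      rcases Nat.even_or_odd (csum s M) with hM | hM
      · left
        refine ⟨M+1, vals_eq, ?_, ?_, hs_next, hs'_next, hs_tail, hs'_tail⟩
        · exact step_val0 hb (iff_of_true hM hsN)
        · exact step_val1 hb' (fun hiff => hs'N (hiff.mp ((hlt M (Nat.lt_succ_self M)).mp hM)))
      · rw [← Nat.not_even_iff_odd] at hM
        right
        refine ⟨M+1, fun k hk => (vals_eq k hk).symm, ?_, ?_, hs'_next, hs_next, hs'_tail, hs_tail⟩
        · exact step_val0 hb' (iff_of_false (fun he => hM ((hlt M (Nat.lt_succ_self M)).mpr he)) hs'N)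
        · exact step_val1 hb (fun hiff => hM (hiff.mpr hsN))

lemma gray_of_Tt_eq {s s' : ℕ → ZMod 6} (hb : Bin s) (hb' : Bin s') (h : Tt s = Tt s') :
    s = s' ∨ grayPair s s' ∨ grayPair s' s := by
  by_cases hpar : ∀ k, (Even (csum s k) ↔ Even (csum s' k))
  · left
    funext m
    exact vals_eq_of_parity hb hb' (fun k _ => hpar k) m le_rfl
  · right
    have hex : ∃ k, ¬ (Even (csum s k) ↔ Even (csum s' k)) := not_forall.mp hpar
    set N := Nat.find hex with hNdef
    have hN : ¬ (Even (csum s N) ↔ Even (csum s' N)) := Nat.find_spec hex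
    have hlt : ∀ k < N, (Even (csum s k) ↔ Even (csum s' k)) := by
      intro k hk
      by_contra hc
      exact absurd (Nat.find_le hc) (not_le.mpr hk)
    -- two orientations
    rcases Classical.em (Even (csum s N)) with hsN | hsN
    · have hs'N : ¬ Even (csum s' N) := fun h' => hN (iff_of_true hsN h')
      exact gray_aux hb hb' h hlt hsN hs'N
    · have hs'N : Even (csum s' N) := by
        by_contra h'
        exact hN (iff_of_false hsN h')
      exact (gray_aux hb' hb h.symm
        (fun k hk => (hlt k hk).symm) hs'N hsN).symm

end Gray
section GrayInv
open Finset

lemma csum_of_tail_const {s : ℕ → ZMod 6} {j : ℕ} (h1 : s (j+1) = 1)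
    (h2 : ∀ k, j+2 ≤ k → s k = 0) : ∀ k, j+1 ≤ k → csum s k = csum s j + 1 := by
  intro k hk
  induction k, hk using Nat.le_induction with
  | base => rw [csum_succ, h1, bitb_one]
  | succ n hn ih => rw [csum_succ, h2 (n+1) (by omega), bitb_zero, ih]

lemma Tt_eq_of_grayPair {s s' : ℕ → ZMod 6} (h : grayPair s s') : Tt s = Tt s' := by
  obtain ⟨j, hpre, hs0, hs'1, hsn, hs'n, hst, hs't⟩ := h
  set P := ∑ m ∈ Finset.range j, bitb (s m) with hP
  have hPeq : ∑ m ∈ Finset.range j, bitb (s' m) = P := by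
    apply Finset.sum_congr rfl
    intro m hm
    rw [hpre m (Finset.mem_range.mp hm)]
  have hcs : csum s j = P := by
    rw [csum, Finset.sum_range_succ, hs0, bitb_zero, add_zero]
  have hcs' : csum s' j = P + 1 := by
    rw [csum, Finset.sum_range_succ, hs'1, bitb_one, hPeq]
  have hts : ∀ k, j+1 ≤ k → csum s k = P + 1 := by
    intro k hk; rw [csum_of_tail_const hsn hst k hk, hcs]
  have hts' : ∀ k, j+1 ≤ k → csum s' k = P + 2 := by
    intro k hk; rw [csum_of_tail_const hs'n hs't k hk, hcs']
  have e1 := Tt_split s (j+1)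
  have e2 := Tt_split s' (j+1)
  rw [Finset.sum_range_succ, tail_tsum_const s (j+1) (P+1) hts] at e1
  rw [Finset.sum_range_succ, tail_tsum_const s' (j+1) (P+2) hts'] at e2
  have hC : ∑ k ∈ Finset.range j, Tterm s k = ∑ k ∈ Finset.range j, Tterm s' k := by
    apply Finset.sum_congr rfl
    intro k hk
    rw [Tterm, Tterm, csum_congr hpre (Finset.mem_range.mp hk)]
  have hTj : Tterm s j = if Even P then 0 else (1/2)^(j+1) := by rw [Tterm, hcs]
  have hTj' : Tterm s' j = if Even (P+1) then 0 else (1/2)^(j+1) := by rw [Tterm, hcs']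
  rw [e1, e2, hC, hTj, hTj']
  have h2 : Even (P+2) ↔ Even P := by simp [Nat.even_add]
  rcases Nat.even_or_odd P with hPe | hPo
  · have h1 : ¬ Even (P+1) := by simp [Nat.even_add_one, hPe]
    rw [if_pos hPe, if_neg h1, if_pos (h2.mpr hPe)]
    ring
  · have hPne : ¬ Even P := Nat.not_even_iff_odd.mpr hPo
    have h1 : Even (P+1) := by simpa [Nat.even_add_one] using hPne
    rw [if_neg hPne, if_pos h1, if_neg (fun hc => hPne (h2.mp hc))]
    ring

end GrayInv
section Dyadic

lemma csum_prepend (i : ZMod 6) (s : ℕ → ZMod 6) :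
    ∀ k, csum (prepend i s) (k+1) = bitb i + csum s k := by
  intro k
  induction k with
  | zero => rw [csum_succ, csum_zero', csum_zero']; rfl
  | succ m ih => rw [csum_succ, ih, csum_succ, Nat.add_assoc]; rfl

lemma csum_prepend0 (i : ZMod 6) (s : ℕ → ZMod 6) : csum (prepend i s) 0 = bitb i := csum_zero' _

lemma Bin_prepend {s : ℕ → ZMod 6} (hb : Bin s) {i : ZMod 6} (hi : i = 0 ∨ i = 1) :
    Bin (prepend i s) := by
  intro m
  cases m with
  | zero => exact hi
  | succ k => exact hb k

lemma Tt_prepend0 (s : ℕ → ZMod 6) : Tt (prepend 0 s) = Tt s / 2 := by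
  have h0 : Tterm (prepend 0 s) 0 = 0 := by
    rw [Tterm, csum_prepend0]
    simp [bitb_zero]
  have hk : ∀ k, Tterm (prepend 0 s) (k+1) = (1/2) * Tterm s k := by
    intro k
    rw [Tterm, Tterm, csum_prepend, bitb_zero, Nat.zero_add]
    split <;> ring
  rw [Tt, Summable.tsum_eq_zero_add (summable_Tterm _), h0, tsum_congr hk, tsum_mul_left]
  rw [zero_add, ← Tt]
  ring

lemma Tt_prepend1 (s : ℕ → ZMod 6) : Tt (prepend 1 s) = 1 - Tt s / 2 := by
  have h0 : Tterm (prepend 1 s) 0 = 1/2 := by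
    rw [Tterm, csum_prepend0, bitb_one]
    norm_num
  have hk : ∀ k, Tterm (prepend 1 s) (k+1) = (1/2)^(k+2) - (1/2) * Tterm s k := by
    intro k
    rw [Tterm, Tterm, csum_prepend, bitb_one]
    rcases Nat.even_or_odd (csum s k) with he | ho
    · rw [if_pos he, if_neg (by rw [Nat.add_comm, Nat.even_add_one]; exact not_not_intro he)]
      ring
    · have hno := Nat.not_even_iff_odd.mpr ho
      rw [if_neg hno, if_pos (by rw [Nat.add_comm, Nat.even_add_one]; exact hno)]
      ring
  have hsub : Summable fun k : ℕ => ((1:ℝ)/2)^(k+2) := by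
    have := sgeom' 1
    simpa [Nat.add_assoc] using this
  rw [Tt, Summable.tsum_eq_zero_add (summable_Tterm _), h0, tsum_congr hk,
    Summable.tsum_sub hsub ((summable_Tterm s).mul_left _)]
  have : ∑' k : ℕ, ((1:ℝ)/2)^(k+2) = 1/2 := by
    have := tail_geom 1
    simpa [Nat.add_assoc] using this
  rw [this, tsum_mul_left, ← Tt]
  ring

lemma dyadic_exists : ∀ n k : ℕ, k ≤ 2^n → ∃ s, Bin s ∧ Tt s = (k:ℝ)/2^n := by
  intro n
  induction n with
  | zero =>
      intro k hk
      interval_cases k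
      · exact ⟨fun _ => 0, fun m => Or.inl rfl, by simp [Tt_all_zero]⟩
      · refine ⟨fun m => if m = 0 then 1 else 0, ?_, ?_⟩
        · intro m; by_cases h : m = 0 <;> simp [h]
        · rw [Tt_one0 (by simp) (fun k hk => by simp [Nat.one_le_iff_ne_zero.mp hk])]
          norm_num
  | succ n ih =>
      intro k hk
      by_cases hk2 : k ≤ 2^n
      · obtain ⟨s, hb, hT⟩ := ih k hk2
        refine ⟨prepend 0 s, Bin_prepend hb (Or.inl rfl), ?_⟩
        rw [Tt_prepend0, hT, pow_succ]
        ring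
      · obtain ⟨s, hb, hT⟩ := ih (2^(n+1) - k) (by omega)
        refine ⟨prepend 1 s, Bin_prepend hb (Or.inr rfl), ?_⟩
        rw [Tt_prepend1, hT]
        have hcast : ((2^(n+1) - k : ℕ) : ℝ) = 2^(n+1) - k := by
          push_cast [Nat.cast_sub (by omega : k ≤ 2^(n+1))]
          ring
        rw [hcast]
        have h2 : (2:ℝ)^(n+1) = 2 * 2^n := by ring
        field_simp
        ring

end Dyadic
section Words

def SSet : Set Word := {w : Word | (w 1 = 2 ∨ w 1 = 3) ∧ ∀ k, 2 ≤ k → (w k = 0 ∨ w k = 1)}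

lemma Bin_tl {w : Word} (hw : w ∈ SSet) : Bin (tl w) := fun m => hw.2 (m+2) (by omega)

def eA (A : ℕ) : ℕ := A + (if Even A then 0 else 1)
def eB (A : ℕ) : ℕ := A + (if Even A then 1 else 0)

lemma arcrel0 : ∀ i : ZMod 6, ∀ b : Bool,
    ((¬ Even i ∧ b = true) ∨ (Even i ∧ b = false)) →
    (eA (arcIdx i b) = eA (arcIdx (i+1) b) ∨ eA (arcIdx i b) + 12 = eA (arcIdx (i+1) b)) := by
  decide

lemma arcrel1 : ∀ i : ZMod 6, eB (arcIdx i false) = eB (arcIdx i true) := by decide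

lemma arc_round : ∀ i : ZMod 6, ∀ b : Bool, arcInv (arcIdx i b) = (i, b) := by decide

lemma arcIdx_le : ∀ i : ZMod 6, ∀ b : Bool, arcIdx i b ≤ 11 := by decide

lemma theta_eA {u : Word} (h : Tt (tl u) = 0) : theta u = (eA (AIdx u) : ℝ) := by
  unfold theta eA
  rcases Nat.even_or_odd (AIdx u) with he | ho
  · rw [if_pos he, if_pos he, h]
    push_cast
    ring
  · have hne := Nat.not_even_iff_odd.mpr ho
    rw [if_neg hne, if_neg hne, h]
    push_cast
    ring

lemma theta_eB {u : Word} (h : Tt (tl u) = 1) : theta u = (eB (AIdx u) : ℝ) := by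
  unfold theta eB
  rcases Nat.even_or_odd (AIdx u) with he | ho
  · rw [if_pos he, if_pos he, h]
    push_cast
    ring
  · have hne := Nat.not_even_iff_odd.mpr ho
    rw [if_neg hne, if_neg hne, h]
    push_cast
    ring

lemma psi_eq_of_theta {u w : Word} (k : ℤ) (h : theta u = theta w + 12*k) : psi u = psi w := by
  unfold psi
  rw [Circle.exp_eq_exp]
  exact ⟨k, by rw [h]; push_cast; ring⟩

lemma tilde_glue0 {u w : Word} (hw0 : w 0 = u 0 + 1) (hagree : ∀ m, 1 ≤ m → u m = w m)
    (hcond : (¬ Even (u 0) ∧ u 1 = 3) ∨ (Even (u 0) ∧ u 1 = 2))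
    (hut : ∀ m, 2 ≤ m → u m = 0) : Tilde u w := by
  refine ⟨0, fun m hm => absurd hm (Nat.not_lt_zero m), hw0, fun m hm => hagree m hm, ?_,
    fun m hm => Or.inl (hut m hm)⟩
  rcases hcond with ⟨h1, h2⟩ | ⟨h1, h2⟩
  · exact Or.inl ⟨h1, Or.inl h2⟩
  · exact Or.inr ⟨h1, Or.inr h2⟩

lemma tilde_glue1 {u w : Word} (h0 : u 0 = w 0) (hu1 : u 1 = 2) (hw1 : w 1 = 3)
    (hu2 : u 2 = 1) (hagree : ∀ m, 2 ≤ m → u m = w m) (hut : ∀ m, 3 ≤ m → u m = 0) :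
    Tilde u w := by
  refine ⟨1, ?_, ?_, fun m hm => hagree m hm, Or.inr ⟨?_, Or.inl hu2⟩, ?_⟩
  · intro m hm
    interval_cases m
    exact h0
  · rw [hw1, hu1]
    decide
  · show Even (u 1)
    rw [hu1]
    decide
  · intro m hm
    exact Or.inl (hut m hm)

lemma tilde_of_grayPair {u w : Word} (h0 : u 0 = w 0) (h1 : u 1 = w 1)
    (hg : grayPair (tl u) (tl w)) : Tilde u w := by
  obtain ⟨j, hpre, hu0, hw1', hun, hwn, hut, hwt⟩ := hg
  have hu0' : u (j+2) = 0 := hu0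
  have hw1'' : w (j+2) = 1 := hw1'
  have hun' : u (j+3) = 1 := hun
  have hwn' : w (j+3) = 1 := hwn
  refine ⟨j+2, ?_, ?_, ?_, Or.inr ⟨?_, Or.inl ?_⟩, ?_⟩
  · intro m hm
    match m, hm with
    | 0, _ => exact h0
    | 1, _ => exact h1
    | (k+2), hm => exact hpre k (by omega)
  · rw [hu0', hw1'']
    decide
  · intro m hm
    match m, hm with
    | (k+2), hm =>
      rcases Nat.lt_or_ge k (j+2) with h | h
      · have hk : k = j+1 := by omega
        subst hk
        rw [show u (j+1+2) = (1 : ZMod 6) from hun', show w (j+1+2) = (1 : ZMod 6) from hwn']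
      · rw [show u (k+2) = (0:ZMod 6) from hut k (by omega),
          show w (k+2) = (0:ZMod 6) from hwt k (by omega)]
  · show Even (u (j+2))
    rw [hu0']
    decide
  · show u (j+2+1) = 1
    exact hun'
  · intro m hm
    match m, hm with
    | (k+2), hm => exact Or.inl (hut k (by omega))

end Words
section Step

lemma mem_transport {u w : Word} (h1 : u 1 = w 1) (h2 : ∀ k, 2 ≤ k → u k = w k) :
    u ∈ SSet ↔ w ∈ SSet := by
  constructor
  · intro hu
    exact ⟨h1 ▸ hu.1, fun k hk => h2 k hk ▸ hu.2 k hk⟩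
  · intro hw
    exact ⟨h1.symm ▸ hw.1, fun k hk => (h2 k hk).symm ▸ hw.2 k hk⟩

lemma tilde_main {u w : Word} (hT : Tilde u w) (hmem : u ∈ SSet ∨ w ∈ SSet) :
    u ∈ SSet ∧ w ∈ SSet ∧ psi u = psi w := by
  obtain ⟨ℓ, hpre, hstep, hpost, hcond, htail⟩ := hT
  rcases Nat.lt_or_ge ℓ 2 with hℓ | hℓ
  · interval_cases ℓ
    -- case ℓ = 0
    · have h1 : u 1 = w 1 := hpost 1 one_pos
      have h2 : ∀ k, 2 ≤ k → u k = w k := fun k hk => hpost k (by omega)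
      have huS : u ∈ SSet := by
        rcases hmem with h | h
        · exact h
        · exact (mem_transport h1 h2).mpr h
      have hwS : w ∈ SSet := (mem_transport h1 h2).mp huS
      refine ⟨huS, hwS, ?_⟩
      have hut : ∀ m, 2 ≤ m → u m = 0 := by
        intro m hm
        rcases htail m hm with h0 | h5
        · exact h0
        · rcases huS.2 m hm with h' | h' <;> rw [h5] at h' <;> exact absurd h' (by decide)
      have hwt : ∀ m, 2 ≤ m → w m = 0 := fun m hm => (h2 m hm) ▸ hut m hm
      have htu : Tt (tl u) = 0 := Tt_all_zero (fun k => hut (k+2) (by omega))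
      have htw : Tt (tl w) = 0 := Tt_all_zero (fun k => hwt (k+2) (by omega))
      -- determine u 1 and the Boolean, then use arcrel0
      have hcase : (¬ Even (u 0) ∧ u 1 = 3) ∨ (Even (u 0) ∧ u 1 = 2) := by
        rcases hcond with ⟨hpar, h34⟩ | ⟨hpar, h12⟩
        · refine Or.inl ⟨hpar, ?_⟩
          rcases h34 with h' | h'
          · exact h'
          · rcases huS.1 with h'' | h'' <;> rw [h'] at h'' <;> exact absurd h'' (by decide)
        · refine Or.inr ⟨hpar, ?_⟩
          rcases h12 with h' | h'
          · rcases huS.1 with h'' | h'' <;> rw [h'] at h'' <;> exact absurd h'' (by decide)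
          · exact h'
      rcases hcase with ⟨hpar, hu1⟩ | ⟨hpar, hu1⟩
      · have hAu : AIdx u = arcIdx (u 0) true := by unfold AIdx; rw [hu1]; rfl
        have hAw : AIdx w = arcIdx (u 0 + 1) true := by
          unfold AIdx; rw [← h1, hu1, hstep]; rfl
        rcases arcrel0 (u 0) true (Or.inl ⟨hpar, rfl⟩) with he | he
        · refine psi_eq_of_theta 0 ?_
          rw [theta_eA htu, theta_eA htw, hAu, hAw, he]
          ring
        · refine psi_eq_of_theta (-1) ?_
          rw [theta_eA htu, theta_eA htw, hAu, hAw, ← he]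
          push_cast
          ring
      · have hAu : AIdx u = arcIdx (u 0) false := by unfold AIdx; rw [hu1]; rfl
        have hAw : AIdx w = arcIdx (u 0 + 1) false := by
          unfold AIdx; rw [← h1, hu1, hstep]; rfl
        rcases arcrel0 (u 0) false (Or.inr ⟨hpar, rfl⟩) with he | he
        · refine psi_eq_of_theta 0 ?_
          rw [theta_eA htu, theta_eA htw, hAu, hAw, he]
          ring
        · refine psi_eq_of_theta (-1) ?_
          rw [theta_eA htu, theta_eA htw, hAu, hAw, ← he]
          push_cast
          ring
    -- case ℓ = 1
    · have h0 : u 0 = w 0 := hpre 0 one_pos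
      have h2 : ∀ k, 2 ≤ k → u k = w k := fun k hk => hpost k (by omega)
      -- establish u 1 = 2, w 1 = 3, u 2 = 1
      have key : u 1 = 2 ∧ w 1 = 3 ∧ u 2 = 1 := by
        rcases hmem with h | h
        · rcases hcond with ⟨hpar, h34⟩ | ⟨hpar, h12⟩
          · -- odd case impossible: u 2 ∈ {3,4} but binary
            exfalso
            rcases h34 with h' | h' <;>
              rcases h.2 2 le_rfl with h'' | h'' <;>
              rw [h'] at h'' <;> exact absurd h'' (by decide)
          · have hu1 : u 1 = 2 := by
              rcases h.1 with h' | h'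
              · exact h'
              · rw [h'] at hpar; exact absurd hpar (by decide)
            have hu2 : u 2 = 1 := by
              rcases h12 with h' | h'
              · exact h'
              · rcases h.2 2 le_rfl with h'' | h'' <;> rw [h'] at h'' <;>
                  exact absurd h'' (by decide)
            exact ⟨hu1, by rw [hstep, hu1]; decide, hu2⟩
        · -- w ∈ SSet
          have hu2w : u 2 = w 2 := h2 2 le_rfl
          rcases hcond with ⟨hpar, h34⟩ | ⟨hpar, h12⟩
          · exfalso
            rcases h34 with h' | h' <;>
              rcases h.2 2 le_rfl with h'' | h'' <;>
              rw [hu2w, h''] at h' <;> exact absurd h' (by decide)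
          · have hu1 : u 1 = 2 := by
              have hw1 : w 1 = u 1 + 1 := hstep
              rcases h.1 with h' | h'
              · -- w 1 = 2 so u 1 = 1, odd, contradiction
                exfalso
                have hx : u 1 + 1 = 2 := by rw [← hstep]; exact h'
                have h9 : u 1 = 1 := by rw [eq_sub_of_add_eq hx]; decide
                rw [h9] at hpar
                exact absurd hpar (by decide)
              · have hx : u 1 + 1 = 3 := by rw [← hstep]; exact h'
                rw [eq_sub_of_add_eq hx]; decide
            have hu2 : u 2 = 1 := by
              rcases h12 with h' | h'
              · exact h'
              · rcases h.2 2 le_rfl with h'' | h'' <;> rw [hu2w, h''] at h' <;>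
                  exact absurd h' (by decide)
            exact ⟨hu1, by rw [hstep, hu1]; decide, hu2⟩
      obtain ⟨hu1, hw1, hu2⟩ := key
      have huS : u ∈ SSet := by
        rcases hmem with h | h
        · exact h
        · refine ⟨Or.inl hu1, fun k hk => ?_⟩
          rw [h2 k hk]
          exact h.2 k hk
      have hwS : w ∈ SSet := by
        refine ⟨Or.inr hw1, fun k hk => ?_⟩
        rw [← h2 k hk]
        exact huS.2 k hk
      refine ⟨huS, hwS, ?_⟩
      have hut : ∀ m, 3 ≤ m → u m = 0 := by
        intro m hm
        rcases htail m (by omega) with h' | h'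
        · exact h'
        · rcases huS.2 m (by omega) with h'' | h'' <;> rw [h'] at h'' <;>
            exact absurd h'' (by decide)
      have htu : Tt (tl u) = 1 := Tt_one0 hu2 (fun k hk => hut (k+2) (by omega))
      have htw : Tt (tl w) = 1 := by
        apply Tt_one0
        · show w 2 = 1
          rw [← h2 2 le_rfl]; exact hu2
        · intro k hk
          show w (k+2) = 0
          rw [← h2 (k+2) (by omega)]
          exact hut (k+2) (by omega)
      have hAu : AIdx u = arcIdx (u 0) false := by unfold AIdx; rw [hu1]; rfl
      have hAw : AIdx w = arcIdx (u 0) true := by unfold AIdx; rw [hw1, ← h0]; rfl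
      refine psi_eq_of_theta 0 ?_
      rw [theta_eB htu, theta_eB htw, hAu, hAw, arcrel1 (u 0)]
      ring
  · -- case ℓ ≥ 2
    obtain ⟨j, rfl⟩ : ∃ j, ℓ = j + 2 := ⟨ℓ - 2, by omega⟩
    have h0 : u 0 = w 0 := hpre 0 (by omega)
    have h1 : u 1 = w 1 := hpre 1 (by omega)
    have hp3 : u (j+3) = w (j+3) := hpost (j+3) (by omega)
    -- key letters
    have key : u (j+2) = 0 ∧ w (j+2) = 1 ∧ u (j+3) = 1 := by
      rcases hmem with h | h
      · rcases hcond with ⟨hpar, h34⟩ | ⟨hpar, h12⟩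
        · exfalso
          rcases h34 with h' | h' <;> rcases h.2 (j+3) (by omega) with h'' | h'' <;>
            rw [h'] at h'' <;> exact absurd h'' (by decide)
        · have hu : u (j+2) = 0 := by
            rcases h.2 (j+2) (by omega) with h' | h'
            · exact h'
            · rw [h'] at hpar; exact absurd hpar (by decide)
          have hn : u (j+3) = 1 := by
            rcases h12 with h' | h'
            · exact h'
            · rcases h.2 (j+3) (by omega) with h'' | h'' <;> rw [h'] at h'' <;>
                exact absurd h'' (by decide)
          exact ⟨hu, by rw [hstep, hu]; decide, hn⟩
      · rcases hcond with ⟨hpar, h34⟩ | ⟨hpar, h12⟩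
        · exfalso
          rcases h34 with h' | h' <;> rcases h.2 (j+3) (by omega) with h'' | h'' <;>
            rw [← hp3, h'] at h'' <;> exact absurd h'' (by decide)
        · have hu : u (j+2) = 0 := by
            rcases h.2 (j+2) (by omega) with h' | h'
            · -- w (j+2) = 0 : u (j+2) = -1 = 5, odd, contra
              exfalso
              have hx : u (j+2) + 1 = 0 := by rw [← hstep]; exact h'
              have h9 : u (j+2) = 5 := by rw [eq_sub_of_add_eq hx]; decide
              rw [h9] at hpar
              exact absurd hpar (by decide)
            · have hx : u (j+2) + 1 = 1 := by rw [← hstep]; exact h'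
              rw [eq_sub_of_add_eq hx]; decide
          have hn : u (j+3) = 1 := by
            rcases h12 with h' | h'
            · exact h'
            · rcases h.2 (j+3) (by omega) with h'' | h'' <;> rw [← hp3, h'] at h'' <;>
                exact absurd h'' (by decide)
          exact ⟨hu, by rw [hstep, hu]; decide, hn⟩
    obtain ⟨hu0, hw1', hu3⟩ := key
    have hut : ∀ k, j+2 ≤ k → u (k+2) = 0 := by
      intro k hk
      rcases htail (k+2) (by omega) with h' | h'
      · exact h'
      · exfalso
        rcases hmem with h | h
        · rcases h.2 (k+2) (by omega) with h'' | h'' <;> rw [h'] at h'' <;>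
            exact absurd h'' (by decide)
        · have := hpost (k+2) (by omega)
          rcases h.2 (k+2) (by omega) with h'' | h'' <;> rw [← this, h'] at h'' <;>
            exact absurd h'' (by decide)
    have hg : grayPair (tl u) (tl w) := by
      refine ⟨j, fun k hk => hpre (k+2) (by omega), hu0, ?_, hu3, ?_, hut, ?_⟩
      · exact hw1'
      · show w (j+1+2) = 1
        rw [show j+1+2 = j+3 by omega, ← hp3]
        exact hu3
      · intro k hk
        show w (k+2) = 0
        rw [← hpost (k+2) (by omega)]
        exact hut k hk
    have huweq : ∀ k, k ≠ j+2 → u k = w k := by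
      intro k hk
      rcases Nat.lt_or_ge k (j+2) with h | h
      · exact hpre k h
      · exact hpost k (by omega)
    have huS : u ∈ SSet := by
      rcases hmem with h | h
      · exact h
      · refine ⟨by rw [h1]; exact h.1, fun k hk => ?_⟩
        by_cases hkj : k = j+2
        · subst hkj; exact Or.inl hu0
        · rw [huweq k hkj]; exact h.2 k hk
    have hwS : w ∈ SSet := by
      refine ⟨by rw [← h1]; exact huS.1, fun k hk => ?_⟩
      by_cases hkj : k = j+2
      · subst hkj; exact Or.inr hw1'
      · rw [← huweq k hkj]; exact huS.2 k hk
    refine ⟨huS, hwS, ?_⟩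
    have hA : AIdx u = AIdx w := by unfold AIdx; rw [h0, h1]
    refine psi_eq_of_theta 0 ?_
    unfold theta
    rw [hA, Tt_eq_of_grayPair hg]
    ring

end Step
section Inj

lemma eqv_main {u w : Word} (h : Relation.EqvGen Tilde u w) :
    (u ∈ SSet → w ∈ SSet ∧ psi u = psi w) ∧ (w ∈ SSet → u ∈ SSet ∧ psi u = psi w) := by
  induction h with
  | rel x y hxy =>
      exact ⟨fun hx => ⟨(tilde_main hxy (Or.inl hx)).2.1, (tilde_main hxy (Or.inl hx)).2.2⟩,
        fun hy => ⟨(tilde_main hxy (Or.inr hy)).1, (tilde_main hxy (Or.inr hy)).2.2⟩⟩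
  | refl x => exact ⟨fun hx => ⟨hx, rfl⟩, fun hx => ⟨hx, rfl⟩⟩
  | symm x y _ ih =>
      exact ⟨fun hx => ⟨(ih.2 hx).1, (ih.2 hx).2.symm⟩, fun hy => ⟨(ih.1 hy).1, (ih.1 hy).2.symm⟩⟩
  | trans x y z _ _ ih1 ih2 =>
      refine ⟨fun hx => ?_, fun hz => ?_⟩
      · obtain ⟨hy, e1⟩ := ih1.1 hx
        obtain ⟨hz, e2⟩ := ih2.1 hy
        exact ⟨hz, e1.trans e2⟩
      · obtain ⟨hy, e2⟩ := ih2.2 hz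
        obtain ⟨hx, e1⟩ := ih1.2 hy
        exact ⟨hx, e1.trans e2⟩

lemma AIdx_le (u : Word) : AIdx u ≤ 11 := arcIdx_le (u 0) _

lemma theta_bounds (u : Word) : (AIdx u : ℝ) ≤ theta u ∧ theta u ≤ AIdx u + 1 := by
  unfold theta
  have h0 := Tt_nonneg (tl u)
  have h1 := Tt_le_one (tl u)
  split <;> constructor <;> linarith

lemma coord_spec {u : Word} (hu : u ∈ SSet) :
    u 0 = (arcInv (AIdx u)).1 ∧ u 1 = (if (arcInv (AIdx u)).2 then 3 else 2) := by
  have h1 := arc_round (u 0) (decide (u 1 = 3))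
  unfold AIdx
  rw [h1]
  refine ⟨rfl, ?_⟩
  by_cases h3 : u 1 = 3
  · simp [h3]
  · rw [decide_eq_false h3]
    simpa using hu.1.resolve_right h3

lemma parity_flip : ∀ a : ℕ, a ≤ 11 → ¬(Even ((a+1) % 12) ↔ Even a) := by decide

lemma glue1_fact : ∀ a : ℕ, a ≤ 11 → Even a →
    ((arcInv ((a+1)%12)).1 = (arcInv a).1 ∧ (arcInv ((a+1)%12)).2 = !(arcInv a).2) := by decide

lemma glue0_fact : ∀ a : ℕ, a ≤ 11 → ¬Even a →
    ((arcInv a).1 = (arcInv ((a+1)%12)).1 + 1 ∧ (arcInv ((a+1)%12)).2 = (arcInv a).2 ∧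
      (if (arcInv a).2 then ¬ Even ((arcInv ((a+1)%12)).1) else Even ((arcInv ((a+1)%12)).1))) := by
  decide

lemma tail_ones {u : Word} (hu : u ∈ SSet) (h : Tt (tl u) = 1) :
    u 2 = 1 ∧ ∀ m, 3 ≤ m → u m = 0 := by
  obtain ⟨h0, hk⟩ := Tt_eq_one_iff (Bin_tl hu) h
  refine ⟨h0, fun m hm => ?_⟩
  have := hk (m-2) (by omega)
  unfold tl at this
  rwa [show m-2+2 = m by omega] at this

lemma tail_zeros {u : Word} (hu : u ∈ SSet) (h : Tt (tl u) = 0) :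
    ∀ m, 2 ≤ m → u m = 0 := by
  intro m hm
  have := Tt_eq_zero_iff (Bin_tl hu) h (m-2)
  unfold tl at this
  rwa [show m-2+2 = m by omega] at this

lemma boundary {u w : Word} (hu : u ∈ SSet) (hw : w ∈ SSet)
    (hA : AIdx w = (AIdx u + 1) % 12)
    (hθu : theta u = AIdx u + 1) (hθw : theta w = AIdx w) :
    Relation.EqvGen Tilde u w := by
  obtain ⟨hu0, hu1⟩ := coord_spec hu
  obtain ⟨hw0, hw1⟩ := coord_spec hw
  have hle : AIdx u ≤ 11 := AIdx_le u
  have hflip := parity_flip (AIdx u) hle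
  rcases Nat.even_or_odd (AIdx u) with hpar | hpar
  · -- glue1 case (t = 1 on both arcs)
    have hwodd : ¬ Even (AIdx w) := by
      rw [hA]
      intro hc
      exact hflip (iff_of_true hc hpar)
    have htu : Tt (tl u) = 1 := by
      unfold theta at hθu
      rw [if_pos hpar] at hθu
      linarith
    have htw : Tt (tl w) = 1 := by
      unfold theta at hθw
      rw [if_neg hwodd] at hθw
      linarith
    obtain ⟨hu2, hut⟩ := tail_ones hu htu
    obtain ⟨hw2, hwt⟩ := tail_ones hw htw
    have hg := glue1_fact (AIdx u) hle hpar
    have he0 : u 0 = w 0 := by rw [hu0, hw0, hA, hg.1]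
    have heb : (arcInv (AIdx w)).2 = !(arcInv (AIdx u)).2 := by rw [hA]; exact hg.2
    have hagree : ∀ m, 2 ≤ m → u m = w m := by
      intro m hm
      rcases eq_or_lt_of_le hm with h | h
      · subst h
        rw [hu2, hw2]
      · rw [hut m (by omega), hwt m (by omega)]
    cases hb : (arcInv (AIdx u)).2
    · have hu1' : u 1 = 2 := by rw [hu1, hb]; rfl
      have hw1' : w 1 = 3 := by rw [hw1, heb, hb]; rfl
      exact Relation.EqvGen.rel u w (tilde_glue1 he0 hu1' hw1' hu2 hagree hut)
    · have hu1' : u 1 = 3 := by rw [hu1, hb]; rfl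
      have hw1' : w 1 = 2 := by rw [hw1, heb, hb]; rfl
      exact Relation.EqvGen.symm _ _ (Relation.EqvGen.rel w u
        (tilde_glue1 he0.symm hw1' hu1' hw2 (fun m hm => (hagree m hm).symm) hwt))
  · -- glue0 case (t = 0 on both arcs)
    have hpar' : ¬ Even (AIdx u) := Nat.not_even_iff_odd.mpr hpar
    have hweven : Even (AIdx w) := by
      rw [hA]
      by_contra hc
      exact hflip (iff_of_false hc hpar')
    have htu : Tt (tl u) = 0 := by
      unfold theta at hθu
      rw [if_neg hpar'] at hθu
      linarith
    have htw : Tt (tl w) = 0 := by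
      unfold theta at hθw
      rw [if_pos hweven] at hθw
      linarith
    have hut := tail_zeros hu htu
    have hwt := tail_zeros hw htw
    have hg := glue0_fact (AIdx u) hle hpar'
    have he0 : u 0 = w 0 + 1 := by
      rw [hu0, hw0, hA]
      exact hg.1
    have heb : (arcInv (AIdx w)).2 = (arcInv (AIdx u)).2 := by rw [hA]; exact hg.2.1
    have hagree : ∀ m, 1 ≤ m → w m = u m := by
      intro m hm
      rcases eq_or_lt_of_le hm with h | h
      · subst h
        rw [hu1, hw1, heb]
      · rw [hut m (by omega), hwt m (by omega)]
    have hcond : (¬ Even (w 0) ∧ w 1 = 3) ∨ (Even (w 0) ∧ w 1 = 2) := by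
      have hcnd := hg.2.2
      cases hb : (arcInv (AIdx u)).2
      · rw [hb] at hcnd
        simp only [if_false, Bool.false_eq_true] at hcnd
        refine Or.inr ⟨by rw [hw0, hA]; exact hcnd, by rw [hw1, heb, hb]; rfl⟩
      · rw [hb] at hcnd
        simp only [if_true] at hcnd
        refine Or.inl ⟨by rw [hw0, hA]; exact hcnd, by rw [hw1, heb, hb]; rfl⟩
    exact Relation.EqvGen.symm _ _ (Relation.EqvGen.rel w u (tilde_glue0 he0 hagree hcond hwt))

end Inj
section InjMain

lemma word_eq {u w : Word} (hu : u ∈ SSet) (hw : w ∈ SSet) (hA : AIdx u = AIdx w)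
    (ht : tl u = tl w) : u = w := by
  obtain ⟨hu0, hu1⟩ := coord_spec hu
  obtain ⟨hw0, hw1⟩ := coord_spec hw
  funext m
  match m with
  | 0 => rw [hu0, hw0, hA]
  | 1 => rw [hu1, hw1, hA]
  | (k+2) => exact congrFun ht k

lemma psi_inj {u w : Word} (hu : u ∈ SSet) (hw : w ∈ SSet) (h : psi u = psi w) :
    Relation.EqvGen Tilde u w := by
  obtain ⟨m, hm⟩ := Circle.exp_eq_exp.mp h
  have hθ : theta u = theta w + 12*m := by
    have h0 : Real.pi * ((theta u - theta w - 12*m)/6) = 0 := by linear_combination hm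
    rcases mul_eq_zero.mp h0 with h' | h'
    · exact absurd h' Real.pi_ne_zero
    · linarith
  obtain ⟨hbu1, hbu2⟩ := theta_bounds u
  obtain ⟨hbw1, hbw2⟩ := theta_bounds w
  have hAu : AIdx u ≤ 11 := AIdx_le u
  have hAw : AIdx w ≤ 11 := AIdx_le w
  have hAu' : (AIdx u : ℝ) ≤ 11 := by exact_mod_cast hAu
  have hAw' : (AIdx w : ℝ) ≤ 11 := by exact_mod_cast hAw
  have hAu0 : (0:ℝ) ≤ (AIdx u : ℝ) := Nat.cast_nonneg _
  have hAw0 : (0:ℝ) ≤ (AIdx w : ℝ) := Nat.cast_nonneg _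
  have hm1 : (-1 : ℤ) ≤ m := by
    have : (-1 : ℝ) ≤ (m:ℝ) := by nlinarith
    exact_mod_cast this
  have hm2 : m ≤ 1 := by
    have : (m:ℝ) ≤ 1 := by nlinarith
    exact_mod_cast this
  interval_cases m
  · -- m = -1 : theta w = theta u + 12 : boundary from w to u
    push_cast at hθ
    have hθw12 : theta w = 12 := by linarith
    have hθu0 : theta u = 0 := by linarith
    have hAw11 : AIdx w = 11 := by
      have : (11:ℝ) ≤ (AIdx w : ℝ) := by linarith
      have h2 : 11 ≤ AIdx w := by exact_mod_cast this
      omega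
    have hAu0' : AIdx u = 0 := by
      have : (AIdx u : ℝ) ≤ 0 := by linarith
      have h2 : AIdx u ≤ 0 := by exact_mod_cast this
      omega
    refine Relation.EqvGen.symm _ _ (boundary hw hu ?_ ?_ ?_)
    · rw [hAw11, hAu0']
    · rw [hAw11, hθw12]; norm_num
    · rw [hAu0', hθu0]; norm_num
  · -- m = 0
    push_cast at hθ
    have hAd1 : AIdx u ≤ AIdx w + 1 := by
      have : (AIdx u : ℝ) ≤ (AIdx w : ℝ) + 1 := by linarith
      exact_mod_cast this
    have hAd2 : AIdx w ≤ AIdx u + 1 := by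
      have : (AIdx w : ℝ) ≤ (AIdx u : ℝ) + 1 := by linarith
      exact_mod_cast this
    rcases (by omega : AIdx u = AIdx w ∨ AIdx w = AIdx u + 1 ∨ AIdx u = AIdx w + 1) with
      hA | hA | hA
    · -- same arc
      have hAr : (AIdx u : ℝ) = (AIdx w : ℝ) := by exact_mod_cast hA
      have hTt : Tt (tl u) = Tt (tl w) := by
        unfold theta at hθ
        rw [hA] at hθ
        split at hθ <;> linarith
      rcases gray_of_Tt_eq (Bin_tl hu) (Bin_tl hw) hTt with he | hg | hg
      · rw [word_eq hu hw hA he]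
        exact Relation.EqvGen.refl w
      · have h1 := coord_spec hu
        have h2 := coord_spec hw
        have e0 : u 0 = w 0 := h1.1.trans (by rw [hA, ← h2.1])
        have e1 : u 1 = w 1 := h1.2.trans (by rw [hA, ← h2.2])
        exact Relation.EqvGen.rel u w (tilde_of_grayPair e0 e1 hg)
      · have h1 := coord_spec hu
        have h2 := coord_spec hw
        have e0 : u 0 = w 0 := h1.1.trans (by rw [hA, ← h2.1])
        have e1 : u 1 = w 1 := h1.2.trans (by rw [hA, ← h2.2])
        exact Relation.EqvGen.symm _ _
          (Relation.EqvGen.rel w u (tilde_of_grayPair e0.symm e1.symm hg))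
    · -- AIdx w = AIdx u + 1
      have hAr : (AIdx w : ℝ) = (AIdx u : ℝ) + 1 := by exact_mod_cast hA
      refine boundary hu hw ?_ ?_ ?_
      · rw [hA, Nat.mod_eq_of_lt (by omega)]
      · linarith
      · linarith
    · have hAr : (AIdx u : ℝ) = (AIdx w : ℝ) + 1 := by exact_mod_cast hA
      refine Relation.EqvGen.symm _ _ (boundary hw hu ?_ ?_ ?_)
      · rw [hA, Nat.mod_eq_of_lt (by omega)]
      · linarith
      · linarith
  · -- m = 1 : theta u = theta w + 12
    push_cast at hθ
    have hθu12 : theta u = 12 := by linarith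
    have hθw0 : theta w = 0 := by linarith
    have hAu11 : AIdx u = 11 := by
      have : (11:ℝ) ≤ (AIdx u : ℝ) := by linarith
      have h2 : 11 ≤ AIdx u := by exact_mod_cast this
      omega
    have hAw0' : AIdx w = 0 := by
      have : (AIdx w : ℝ) ≤ 0 := by linarith
      have h2 : AIdx w ≤ 0 := by exact_mod_cast this
      omega
    refine boundary hu hw ?_ ?_ ?_
    · rw [hAu11, hAw0']
    · rw [hAu11, hθu12]; norm_num
    · rw [hAw0', hθw0]; norm_num

end InjMain
section Surj

lemma arcback : ∀ a : ℕ, a ≤ 11 → arcIdx (arcInv a).1 (arcInv a).2 = a := by decide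

/-- build a word from an arc index and a tail -/
def mkWord (A : ℕ) (s : ℕ → ZMod 6) : Word := fun m =>
  match m with
  | 0 => (arcInv A).1
  | 1 => if (arcInv A).2 then 3 else 2
  | (k+2) => s k

lemma mkWord_mem {A : ℕ} {s : ℕ → ZMod 6} (hs : Bin s) : mkWord A s ∈ SSet := by
  constructor
  · show (if (arcInv A).2 then (3:ZMod 6) else 2) = 2 ∨ (if (arcInv A).2 then (3:ZMod 6) else 2) = 3
    cases (arcInv A).2
    · exact Or.inl rfl
    · exact Or.inr rfl
  · intro k hk
    obtain ⟨m, rfl⟩ : ∃ m, k = m + 2 := ⟨k - 2, by omega⟩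
    exact hs m

lemma mkWord_AIdx {A : ℕ} (hA : A ≤ 11) (s : ℕ → ZMod 6) : AIdx (mkWord A s) = A := by
  unfold AIdx
  have hb : decide (mkWord A s 1 = 3) = (arcInv A).2 := by
    show decide ((if (arcInv A).2 then (3:ZMod 6) else 2) = 3) = (arcInv A).2
    cases (arcInv A).2 <;> rfl
  rw [hb]
  exact arcback A hA

lemma mkWord_tl (A : ℕ) (s : ℕ → ZMod 6) : tl (mkWord A s) = s := rfl

lemma isClosed_coord (k : ℕ) (P : ZMod 6 → Prop) : IsClosed {w : Word | P (w k)} :=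
  (isClosed_discrete {x | P x}).preimage (continuous_apply k)

lemma isClosed_S : IsClosed SSet := by
  have : SSet = {w : Word | w 1 = 2 ∨ w 1 = 3} ∩ ⋂ k : ℕ, {w : Word | 2 ≤ k → (w k = 0 ∨ w k = 1)} := by
    ext w
    simp only [SSet, Set.mem_setOf_eq, Set.mem_inter_iff, Set.mem_iInter]
  rw [this]
  refine (isClosed_coord 1 (fun x => x = 2 ∨ x = 3)).inter (isClosed_iInter fun k => ?_)
  by_cases hk : 2 ≤ k
  · have : {w : Word | 2 ≤ k → (w k = 0 ∨ w k = 1)} = {w : Word | w k = 0 ∨ w k = 1} := by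
      ext w; simp [hk]
    rw [this]
    exact isClosed_coord k (fun x => x = 0 ∨ x = 1)
  · have : {w : Word | 2 ≤ k → (w k = 0 ∨ w k = 1)} = Set.univ := by
      ext w; simp [hk]
    rw [this]
    exact isClosed_univ

lemma isCompact_S : IsCompact SSet := isClosed_S.isCompact

/-- all circle points with dyadic angle are in the image -/
lemma dyadic_in_image (j : ℤ) (n : ℕ) :
    Circle.exp (Real.pi/6 * (j / 2^n)) ∈ psi '' SSet := by
  obtain ⟨q, r, hr0, hrM, hjqr⟩ : ∃ q r : ℤ, 0 ≤ r ∧ r < 12*2^n ∧ j = 12*2^n*q + r := by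
    refine ⟨j / (12*2^n), j % (12*2^n), Int.emod_nonneg _ (by positivity),
      Int.emod_lt_of_pos _ (by positivity), ?_⟩
    have := Int.mul_ediv_add_emod j (12*2^n)
    linarith
  set N : ℕ := r.toNat with hN
  have hNr : (N : ℤ) = r := Int.toNat_of_nonneg hr0
  have hNlt : N < 12 * 2^n := by
    have h1 : (N:ℤ) < 12 * 2^n := by rw [hNr]; exact_mod_cast hrM
    exact_mod_cast h1
  set A : ℕ := N / 2^n with hA
  set b : ℕ := N % 2^n with hb
  have hA11 : A ≤ 11 := by
    have h2 : 0 < 2^n := Nat.pow_pos (n := n) (by norm_num)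
    have := Nat.div_lt_iff_lt_mul h2 |>.mpr (by omega : N < 12 * 2^n)
    omega
  have hblt : b < 2^n := Nat.mod_lt N (Nat.pow_pos (n := n) (by norm_num))
  have hNAb : N = 2^n * A + b := by rw [hA, hb]; exact (Nat.div_add_mod N (2^n)).symm
  obtain ⟨s, hsB, hsT⟩ : ∃ s, Bin s ∧
      Tt s = (if Even A then (b:ℝ)/2^n else ((2^n - b : ℕ):ℝ)/2^n) := by
    rcases Nat.even_or_odd A with hp | hp
    · obtain ⟨s, h1, h2⟩ := dyadic_exists n b (le_of_lt hblt)
      exact ⟨s, h1, by rw [if_pos hp]; exact h2⟩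
    · obtain ⟨s, h1, h2⟩ := dyadic_exists n (2^n - b) (by omega)
      exact ⟨s, h1, by rw [if_neg (Nat.not_even_iff_odd.mpr hp)]; exact h2⟩
  refine ⟨mkWord A s, mkWord_mem hsB, ?_⟩
  have hθ : theta (mkWord A s) = (N : ℝ) / 2^n := by
    unfold theta
    rw [mkWord_AIdx hA11, mkWord_tl, hsT]
    have hcast : ((2^n - b : ℕ) : ℝ) = 2^n - b := by
      push_cast [Nat.cast_sub (le_of_lt hblt)]
      ring
    have hN' : (N:ℝ) = 2^n * A + b := by exact_mod_cast hNAb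
    have h2n : (0:ℝ) < 2^n := by positivity
    rcases Nat.even_or_odd A with hp | hp
    · rw [if_pos hp, if_pos hp, hN']
      field_simp
    · have hp' := Nat.not_even_iff_odd.mpr hp
      rw [if_neg hp', if_neg hp', hcast, hN']
      field_simp
      ring
  unfold psi
  rw [hθ, Circle.exp_eq_exp]
  refine ⟨-q, ?_⟩
  have hjR : (j:ℝ) = 12*2^n*q + N := by
    rw [hjqr, ← hNr]
    push_cast
    ring
  have h2n : (0:ℝ) < 2^n := by positivity
  rw [hjR]
  field_simp
  push_cast
  ring

lemma dense_dyadic : Dense {x : ℝ | ∃ j : ℤ, ∃ n : ℕ, x = j / 2^n} := by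
  rw [dense_iff_exists_between]
  intro a b hab
  obtain ⟨n, hn⟩ := exists_pow_lt_of_lt_one (by linarith : (0:ℝ) < b - a) (by norm_num : (1:ℝ)/2 < 1)
  have h2n : (0:ℝ) < 2^n := by positivity
  have hpow : ((1:ℝ)/2)^n = 1/2^n := by rw [div_pow, one_pow]
  refine ⟨(⌊a * 2^n⌋ + 1) / 2^n, ⟨⌊a * 2^n⌋ + 1, n, by push_cast; ring⟩, ?_, ?_⟩
  · rw [lt_div_iff₀ h2n]
    push_cast
    linarith [Int.lt_floor_add_one (a * 2^n)]
  · rw [div_lt_iff₀ h2n]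
    have h1 : (⌊a * 2^n⌋ : ℝ) ≤ a * 2^n := Int.floor_le _
    rw [hpow] at hn
    have : 1/2^n < b - a := hn
    push_cast
    calc (⌊a * 2^n⌋ : ℝ) + 1 ≤ a * 2^n + 1 := by linarith
    _ < b * 2^n := by
        have : (1:ℝ) < (b-a) * 2^n := by
          rw [div_lt_iff₀ h2n] at this
          linarith
        nlinarith
  
lemma psi_surj_S : psi '' SSet = Set.univ := by
  have hclosed : IsClosed (psi '' SSet) := (isCompact_S.image continuous_psi).isClosed
  have hg : Continuous (fun x : ℝ => Circle.exp (Real.pi/6 * x)) :=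
    Circle.exp.continuous.comp (continuous_const.mul continuous_id)
  have hsub : (fun x : ℝ => Circle.exp (Real.pi/6 * x)) '' {x : ℝ | ∃ j : ℤ, ∃ n : ℕ, x = j / 2^n}
      ⊆ psi '' SSet := by
    rintro z ⟨x, ⟨j, n, rfl⟩, rfl⟩
    exact dyadic_in_image j n
  apply Set.eq_univ_of_univ_subset
  intro z _
  have hzexp : z = Circle.exp (Real.pi/6 * (6/Real.pi * Complex.arg z)) := by
    rw [show Real.pi/6 * (6/Real.pi * Complex.arg z) = Complex.arg z by
      field_simp]
    exact (Circle.exp_arg z).symm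
  have hmem : z ∈ (fun x : ℝ => Circle.exp (Real.pi/6 * x)) '' (Set.univ : Set ℝ) :=
    ⟨6/Real.pi * Complex.arg z, trivial, hzexp.symm⟩
  have hcl : (fun x : ℝ => Circle.exp (Real.pi/6 * x)) '' (Set.univ : Set ℝ)
      ⊆ closure (psi '' SSet) := by
    have h1 : (Set.univ : Set ℝ) ⊆ closure {x : ℝ | ∃ j : ℤ, ∃ n : ℕ, x = j / 2^n} := by
      rw [dense_iff_closure_eq.mp dense_dyadic]
    intro y hy
    obtain ⟨x, _, rfl⟩ := hy
    have : x ∈ closure {x : ℝ | ∃ j : ℤ, ∃ n : ℕ, x = j / 2^n} := h1 trivial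
    have himg := image_closure_subset_closure_image hg (Set.mem_image_of_mem _ this)
    exact closure_mono hsub himg
  have := hcl hmem
  rwa [hclosed.closure_eq] at this

end Surj
section Final

lemma continuous_piK : Continuous piK := continuous_quot_mk

lemma isQuotientMap_piK : Topology.IsQuotientMap piK := isQuotientMap_quot_mk

def CS : Set Hexacarpet := piK '' SSet

def qm : ↥SSet → ↥CS := fun u => ⟨piK u.1, ⟨u.1, u.2, rfl⟩⟩

lemma continuous_qm : Continuous qm :=
  Continuous.subtype_mk (continuous_piK.comp continuous_subtype_val) _

lemma surjective_qm : Function.Surjective qm := by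
  rintro ⟨c, u, hu, rfl⟩
  exact ⟨⟨u, hu⟩, rfl⟩

lemma qm_eq_iff {u w : ↥SSet} : qm u = qm w ↔ psi u.1 = psi w.1 := by
  constructor
  · intro h
    have h2 : piK u.1 = piK w.1 := congrArg Subtype.val h
    have h3 : Relation.EqvGen Tilde u.1 w.1 := Quotient.exact h2
    exact ((eqv_main h3).1 u.2).2
  · intro h
    exact Subtype.ext (Quotient.sound (psi_inj u.2 w.2 h))

lemma isClosedMap_qm : IsClosedMap qm := by
  have : CompactSpace ↥SSet := isCompact_iff_compactSpace.mp isCompact_S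
  intro F hF
  have hFc : IsCompact F := hF.isCompact
  have hF0 : IsCompact (Subtype.val '' F) := hFc.image continuous_subtype_val
  have hF0sub : Subtype.val '' F ⊆ SSet := by
    rintro v ⟨u, _, rfl⟩
    exact u.2
  have hK : IsClosed (psi '' (Subtype.val '' F)) := (hF0.image continuous_psi).isClosed
  have hsat : piK ⁻¹' (piK '' (Subtype.val '' F))
      = SSet ∩ psi ⁻¹' (psi '' (Subtype.val '' F)) := by
    ext v
    constructor
    · rintro ⟨u, huF, hq⟩
      have h3 : Relation.EqvGen Tilde u v := Quotient.exact hq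
      obtain ⟨hv, he⟩ := (eqv_main h3).1 (hF0sub huF)
      exact ⟨hv, ⟨u, huF, he⟩⟩
    · rintro ⟨hvS, u, huF, he⟩
      exact ⟨u, huF, Quotient.sound (psi_inj (hF0sub huF) hvS he)⟩
  have himg : qm '' F = Subtype.val ⁻¹' (piK '' (Subtype.val '' F)) := by
    ext c
    constructor
    · rintro ⟨u, huF, rfl⟩
      exact ⟨u.1, ⟨u, huF, rfl⟩, rfl⟩
    · rintro ⟨v, ⟨u, huF, rfl⟩, hpk⟩
      exact ⟨u, huF, Subtype.ext hpk⟩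
  rw [himg]
  have hcl : IsClosed (piK '' (Subtype.val '' F)) := by
    rw [← isQuotientMap_piK.isClosed_preimage, hsat]
    exact isClosed_S.inter (hK.preimage continuous_psi)
  exact hcl.preimage continuous_subtype_val

lemma isQuotientMap_qm : Topology.IsQuotientMap qm :=
  isClosedMap_qm.isQuotientMap continuous_qm surjective_qm

noncomputable def em : ↥CS → Circle := fun c => psi (Function.surjInv surjective_qm c).1

lemma em_qm (u : ↥SSet) : em (qm u) = psi u.1 :=
  qm_eq_iff.mp (Function.surjInv_eq surjective_qm (qm u))

lemma continuous_em : Continuous em := by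
  rw [isQuotientMap_qm.continuous_iff]
  have h : em ∘ qm = fun u : ↥SSet => psi u.1 := funext em_qm
  rw [h]
  exact continuous_psi.comp continuous_subtype_val

lemma bijective_em : Function.Bijective em := by
  constructor
  · intro c c' h
    obtain ⟨u, rfl⟩ := surjective_qm c
    obtain ⟨w, rfl⟩ := surjective_qm c'
    rw [em_qm, em_qm] at h
    exact qm_eq_iff.mpr h
  · intro z
    have hz : z ∈ psi '' SSet := by rw [psi_surj_S]; trivial
    obtain ⟨u, hu, he⟩ := hz
    exact ⟨qm ⟨u, hu⟩, by rw [em_qm]; exact he⟩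

instance : CompactSpace ↥CS := isCompact_iff_compactSpace.mp (isCompact_S.image continuous_piK)

noncomputable def theHomeo : ↥CS ≃ₜ Circle :=
  Continuous.homeoOfEquivCompactToT2 (f := Equiv.ofBijective em bijective_em) continuous_em

end Final
end S13
end


/-- the subset
`C = π({w ∈ Σ : w₂ ∈ {2,3},  w_k ∈ {0,1} for all k ≥ 3})` of `K` is homeomorphic to
the circle. (In 0-indexed form, `w₂ = w 1` and the condition `k ≥ 3` reads `k ≥ 2`.) -/
theorem stmt13 :
    Nonempty
      ((piK '' {w : Word | (w 1 = 2 ∨ w 1 = 3) ∧ ∀ k, 2 ≤ k → (w k = 0 ∨ w k = 1)} :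
        Set Hexacarpet) ≃ₜ Circle) := by
  exact ⟨S13.theHomeo⟩
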